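/- The function d ↦ 2^{4/(d+4)} · ((d+2)/(d+4))^{(2d+4)/(d+4)} tends to 1 as d → ∞. Combined with the fact that inf_{γ∈[0,d/3]} PR(d,γ) → 1 as d → ∞, this shows that the asymptotic risk ratio R(n, OWNN)/R(n, γ) = 2^{4/(d+4)}·((d+2)/(d+4))^{(2d+4)/(d+4)}·PR(d,γ)^{−1} tends to 1 as d → ∞: in high dimensions the performance differences among k-NN, interpolated-NN and OWNN become negligible even at the multiplicative-constant level. -/

import Mathlib

open Real Filter

/-- The performance ratio of interpolated-NN (interpolation level `γ`) to standard k-NN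
in dimension `d`. -/
noncomputable def PR (d γ : ℝ) : ℝ :=
  (1 + γ ^ 2 / (d * (d - 2 * γ))) ^ ((4 : ℝ) / (d + 4)) *
    ((d - γ) ^ 2 / (d + 2 - γ) ^ 2 * (d + 2) ^ 2 / d ^ 2) ^ (d / (d + 4))

lemma rpow_tendsto_aux {f g : ℝ → ℝ} {a b : ℝ} (ha : a ≠ 0)
    (hf : Tendsto f atTop (nhds a)) (hg : Tendsto g atTop (nhds b)) :
    Tendsto (fun d => f d ^ g d) atTop (nhds (a ^ b)) :=
  (Real.continuousAt_rpow (a, b) (Or.inl ha)).tendsto.comp (hf.prodMk_nhds hg)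

lemma aux_div {c : ℝ} : Tendsto (fun d : ℝ => c / (d + 4)) atTop (nhds 0) :=
  Tendsto.div_atTop tendsto_const_nhds (tendsto_atTop_add_const_right _ 4 tendsto_id)

lemma base_tendsto : Tendsto (fun d : ℝ => (d + 2) / (d + 4)) atTop (nhds 1) := by
  have h : Tendsto (fun d : ℝ => 1 - 2 / (d + 4)) atTop (nhds 1) := by
    simpa using tendsto_const_nhds.sub (aux_div (c := 2))
  refine h.congr' ?_
  filter_upwards [eventually_gt_atTop (0:ℝ)] with d hd
  field_simp
  ring

lemma exp_tendsto : Tendsto (fun d : ℝ => (2 * d + 4) / (d + 4)) atTop (nhds 2) := by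
  have h : Tendsto (fun d : ℝ => 2 - 4 / (d + 4)) atTop (nhds 2) := by
    simpa using tendsto_const_nhds.sub (aux_div (c := 4))
  refine h.congr' ?_
  filter_upwards [eventually_gt_atTop (0:ℝ)] with d hd
  field_simp
  ring

lemma F_tendsto : Tendsto (fun d : ℝ =>
    (2 : ℝ) ^ ((4 : ℝ) / (d + 4)) * ((d + 2) / (d + 4)) ^ ((2 * d + 4) / (d + 4)))
    atTop (nhds 1) := by
  have h1 : Tendsto (fun d : ℝ => (2 : ℝ) ^ ((4 : ℝ) / (d + 4))) atTop (nhds 1) := by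
    have := rpow_tendsto_aux (f := fun _ => (2:ℝ)) (g := fun d => (4:ℝ) / (d + 4))
      (two_ne_zero) tendsto_const_nhds aux_div
    simpa using this
  have h2 : Tendsto (fun d : ℝ => ((d + 2) / (d + 4)) ^ ((2 * d + 4) / (d + 4)))
      atTop (nhds 1) := by
    have := rpow_tendsto_aux (a := 1) (b := 2) one_ne_zero base_tendsto exp_tendsto
    simpa using this
  simpa using h1.mul h2

lemma L_tendsto : Tendsto (fun d : ℝ =>
    (2 : ℝ) ^ ((4 : ℝ) / (d + 4)) * ((d + 2) / (d + 4)) ^ ((2 * d + 4) / (d + 4)) *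
      ((4 / 3 : ℝ) ^ ((4 : ℝ) / (d + 4)))⁻¹) atTop (nhds 1) := by
  have h3 : Tendsto (fun d : ℝ => (4 / 3 : ℝ) ^ ((4 : ℝ) / (d + 4))) atTop (nhds 1) := by
    have := rpow_tendsto_aux (f := fun _ => (4/3:ℝ)) (g := fun d => (4:ℝ) / (d + 4))
      (by norm_num) tendsto_const_nhds aux_div
    simpa using this
  simpa using F_tendsto.mul (h3.inv₀ one_ne_zero)

lemma U_tendsto : Tendsto (fun d : ℝ =>
    (2 : ℝ) ^ ((4 : ℝ) / (d + 4)) * ((d + 2) / (d + 4)) ^ ((2 * d + 4) / (d + 4)) *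
      (1 - 2 / d)⁻¹) atTop (nhds 1) := by
  have h : Tendsto (fun d : ℝ => 1 - 2 / d) atTop (nhds 1) := by
    simpa using tendsto_const_nhds.sub
      (Tendsto.div_atTop (tendsto_const_nhds (x := (2:ℝ))) tendsto_id)
  simpa using F_tendsto.mul (h.inv₀ one_ne_zero)

lemma PR_bounds (d γ : ℝ) (hd : 3 ≤ d) (hγ0 : 0 ≤ γ) (hγ : γ ≤ d / 3) :
    1 - 2 / d ≤ PR d γ ∧ PR d γ ≤ (4 / 3 : ℝ) ^ ((4 : ℝ) / (d + 4)) := by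
  have hd0 : (0:ℝ) < d := by linarith
  have hden : (0:ℝ) < d - 2 * γ := by linarith
  have hp0 : (0:ℝ) ≤ 4 / (d + 4) := by positivity
  have hq0 : (0:ℝ) ≤ d / (d + 4) := by positivity
  have hq1 : d / (d + 4) ≤ 1 := by
    rw [div_le_one (by linarith)]; linarith
  set A := 1 + γ ^ 2 / (d * (d - 2 * γ)) with hA
  set B := (d - γ) ^ 2 / (d + 2 - γ) ^ 2 * (d + 2) ^ 2 / d ^ 2 with hB
  have hA1 : 1 ≤ A := by
    have : 0 ≤ γ ^ 2 / (d * (d - 2 * γ)) := by positivity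
    simp only [hA]; linarith
  have hA2 : A ≤ 4 / 3 := by
    have h1 : γ ^ 2 / (d * (d - 2 * γ)) ≤ 1 / 3 := by
      rw [div_le_iff₀ (by positivity)]
      nlinarith
    simp only [hA]; linarith
  have hne1 : d + 2 - γ ≠ 0 := by intro h; nlinarith
  have hBeq : B = ((d - γ) * (d + 2)) ^ 2 / ((d + 2 - γ) * d) ^ 2 := by
    simp only [hB]
    field_simp
  have hBden : (0:ℝ) < ((d + 2 - γ) * d) ^ 2 := by
    have : (0:ℝ) < d + 2 - γ := by nlinarith
    positivity
  have hB1 : B ≤ 1 := by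
    rw [hBeq, div_le_one hBden]
    nlinarith
  have hlow : (0:ℝ) < 1 - 2 / d := by
    rw [sub_pos, div_lt_one hd0]; linarith
  have hB2 : 1 - 2 / d ≤ B := by
    rw [hBeq, le_div_iff₀ hBden]
    have key : (1 - 2 / d) * ((d + 2 - γ) * d) ^ 2 = (d - 2) * d * (d + 2 - γ) ^ 2 := by
      field_simp
    rw [key]
    have h1 : (d - 1) * (d + 2 - γ) ≤ (d - γ) * (d + 2) := by nlinarith
    have h2 : (0:ℝ) ≤ (d - 1) * (d + 2 - γ) := by nlinarith
    have h3 : ((d - 1) * (d + 2 - γ)) ^ 2 ≤ ((d - γ) * (d + 2)) ^ 2 :=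
      pow_le_pow_left₀ h2 h1 2
    have h4 : ((d - 1) * (d + 2 - γ)) ^ 2 = (d - 2) * d * (d + 2 - γ) ^ 2 + (d + 2 - γ) ^ 2 := by
      ring
    linarith [sq_nonneg (d + 2 - γ)]
  have hB0 : (0:ℝ) < B := lt_of_lt_of_le hlow hB2
  have hAp1 : 1 ≤ A ^ ((4:ℝ) / (d + 4)) := by
    calc (1:ℝ) = 1 ^ ((4:ℝ) / (d + 4)) := (Real.one_rpow _).symm
    _ ≤ A ^ ((4:ℝ) / (d + 4)) := Real.rpow_le_rpow zero_le_one hA1 hp0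
  have hAp2 : A ^ ((4:ℝ) / (d + 4)) ≤ (4 / 3 : ℝ) ^ ((4:ℝ) / (d + 4)) :=
    Real.rpow_le_rpow (by linarith) hA2 hp0
  have hBq1 : B ≤ B ^ (d / (d + 4)) := by
    calc B = B ^ (1:ℝ) := (Real.rpow_one B).symm
    _ ≤ B ^ (d / (d + 4)) := Real.rpow_le_rpow_of_exponent_ge hB0 hB1 hq1
  have hBq2 : B ^ (d / (d + 4)) ≤ 1 := Real.rpow_le_one (le_of_lt hB0) hB1 hq0
  constructor
  · calc 1 - 2 / d ≤ B := hB2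
    _ ≤ B ^ (d / (d + 4)) := hBq1
    _ = 1 * B ^ (d / (d + 4)) := (one_mul _).symm
    _ ≤ A ^ ((4:ℝ) / (d + 4)) * B ^ (d / (d + 4)) :=
        mul_le_mul_of_nonneg_right hAp1 (Real.rpow_nonneg (le_of_lt hB0) _)
  · calc PR d γ = A ^ ((4:ℝ) / (d + 4)) * B ^ (d / (d + 4)) := rfl
    _ ≤ (4 / 3 : ℝ) ^ ((4:ℝ) / (d + 4)) * 1 :=
        mul_le_mul hAp2 hBq2 (Real.rpow_nonneg (le_of_lt hB0) _) (by positivity)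
    _ = (4 / 3 : ℝ) ^ ((4:ℝ) / (d + 4)) := mul_one _

/-- The OWNN-to-kNN risk ratio `2^{4/(d+4)}·((d+2)/(d+4))^{(2d+4)/(d+4)}`
tends to `1` as `d → ∞`; combined with `inf_{γ∈[0,d/3]} PR d γ → 1`, the asymptotic
risk ratio `R(n, OWNN)/R(n, γ) = 2^{4/(d+4)}·((d+2)/(d+4))^{(2d+4)/(d+4)}·PR(d,γ)⁻¹`
tends to `1` as `d → ∞`, uniformly over `γ ∈ [0, d/3]`: in high dimensions the
performance differences among k-NN, interpolated-NN and OWNN become negligible even at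
the multiplicative-constant level. -/
theorem ownn_ratio_tendsto_one :
    Tendsto (fun d : ℝ =>
        (2 : ℝ) ^ ((4 : ℝ) / (d + 4)) * ((d + 2) / (d + 4)) ^ ((2 * d + 4) / (d + 4)))
      atTop (nhds 1) ∧
    ∀ ε : ℝ, 0 < ε → ∃ D : ℕ, ∀ d : ℕ, D ≤ d →
      ∀ γ : ℝ, γ ∈ Set.Icc (0 : ℝ) ((d : ℝ) / 3) →
        |(2 : ℝ) ^ ((4 : ℝ) / ((d : ℝ) + 4)) *
            (((d : ℝ) + 2) / ((d : ℝ) + 4)) ^ ((2 * (d : ℝ) + 4) / ((d : ℝ) + 4)) *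
            (PR d γ)⁻¹ - 1| < ε := by
  constructor
  · exact F_tendsto
  · intro ε hε
    have hLn : Tendsto (fun n : ℕ =>
        (2 : ℝ) ^ ((4 : ℝ) / ((n : ℝ) + 4)) *
          (((n : ℝ) + 2) / ((n : ℝ) + 4)) ^ ((2 * (n : ℝ) + 4) / ((n : ℝ) + 4)) *
          ((4 / 3 : ℝ) ^ ((4 : ℝ) / ((n : ℝ) + 4)))⁻¹) atTop (nhds 1) :=
      L_tendsto.comp tendsto_natCast_atTop_atTop
    have hUn : Tendsto (fun n : ℕ =>
        (2 : ℝ) ^ ((4 : ℝ) / ((n : ℝ) + 4)) *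
          (((n : ℝ) + 2) / ((n : ℝ) + 4)) ^ ((2 * (n : ℝ) + 4) / ((n : ℝ) + 4)) *
          (1 - 2 / (n : ℝ))⁻¹) atTop (nhds 1) :=
      U_tendsto.comp tendsto_natCast_atTop_atTop
    obtain ⟨N1, hN1⟩ := Metric.tendsto_atTop.mp hLn ε hε
    obtain ⟨N2, hN2⟩ := Metric.tendsto_atTop.mp hUn ε hε
    refine ⟨max (max N1 N2) 3, fun d hd γ hγ => ?_⟩
    obtain ⟨hγ0, hγ1⟩ := hγ
    have hd3 : (3:ℝ) ≤ (d : ℝ) := by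
      exact_mod_cast le_trans (le_max_right _ _) hd
    have hd0 : (0:ℝ) < (d:ℝ) := by linarith
    obtain ⟨hPR1, hPR2⟩ := PR_bounds (d : ℝ) γ hd3 hγ0 hγ1
    have hlow : (0:ℝ) < 1 - 2 / (d:ℝ) := by
      rw [sub_pos, div_lt_one hd0]; linarith
    have hPR0 : (0:ℝ) < PR d γ := lt_of_lt_of_le hlow hPR1
    set F := (2 : ℝ) ^ ((4 : ℝ) / ((d : ℝ) + 4)) *
        (((d : ℝ) + 2) / ((d : ℝ) + 4)) ^ ((2 * (d : ℝ) + 4) / ((d : ℝ) + 4)) with hF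
    have hF0 : (0:ℝ) < F := by
      have h1 : (0:ℝ) < ((d : ℝ) + 2) / ((d : ℝ) + 4) := by positivity
      simp only [hF]; positivity
    have hinv1 : ((4 / 3 : ℝ) ^ ((4 : ℝ) / ((d:ℝ) + 4)))⁻¹ ≤ (PR d γ)⁻¹ :=
      inv_anti₀ hPR0 hPR2
    have hinv2 : (PR d γ)⁻¹ ≤ (1 - 2 / (d:ℝ))⁻¹ :=
      inv_anti₀ hlow hPR1
    have hgL : F * ((4 / 3 : ℝ) ^ ((4 : ℝ) / ((d:ℝ) + 4)))⁻¹ ≤ F * (PR d γ)⁻¹ :=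
      mul_le_mul_of_nonneg_left hinv1 (le_of_lt hF0)
    have hgU : F * (PR d γ)⁻¹ ≤ F * (1 - 2 / (d:ℝ))⁻¹ :=
      mul_le_mul_of_nonneg_left hinv2 (le_of_lt hF0)
    have hL := hN1 d (le_trans (le_trans (le_max_left _ _) (le_max_left _ _)) hd)
    have hU := hN2 d (le_trans (le_trans (le_max_right _ _) (le_max_left _ _)) hd)
    rw [Real.dist_eq, abs_lt] at hL hU
    rw [abs_lt]
    constructor
    · have : F * ((4 / 3 : ℝ) ^ ((4 : ℝ) / ((d:ℝ) + 4)))⁻¹ - 1 > -ε := hL.1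
      linarith [hgL]
    · have : F * (1 - 2 / (d:ℝ))⁻¹ - 1 < ε := hU.2
      linarith [hgU]
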